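/- Let φ(x) = a x^d + ⋯ ∈ ℂ[x] be a polynomial of degree d ≥ 2 with leading coefficient a. Then the canonical local height ĥ_φ(x) = lim_{n→∞} d^{-n} log⁺|φ^n(x)| satisfies lim_{|x|→∞} (ĥ_φ(x) − log|x|) = (log|a|)/(d−1). -/

import Mathlib

open Filter Polynomial

/-- The Call–Silverman canonical local height of `x ∈ ℂ` for a polynomial `φ ∈ ℂ[x]`:
`ĥ_φ(x) = lim_{n→∞} d^{−n} log⁺|φ^n(x)|`, where `d = deg φ`. -/
noncomputable def canHeight (φ : Polynomial ℂ) (x : ℂ) : ℝ :=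
  limUnder atTop fun n : ℕ =>
    ((φ.natDegree : ℝ) ^ n)⁻¹ *
      Real.log (max 1 (‖(fun y : ℂ => φ.eval y)^[n] x‖))

lemma aux_eval_bound (q : Polynomial ℂ) (x : ℂ) (hx : 1 ≤ ‖x‖) :
    ‖q.eval x‖ ≤
      (∑ i ∈ Finset.range (q.natDegree + 1), ‖q.coeff i‖) *
        ‖x‖ ^ q.natDegree := by
  rw [Polynomial.eval_eq_sum_range]
  refine (norm_sum_le _ _).trans ?_
  rw [Finset.sum_mul]
  refine Finset.sum_le_sum fun i hi => ?_
  rw [norm_mul, norm_pow]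
  exact mul_le_mul_of_nonneg_left
    (pow_le_pow_right₀ hx (Nat.lt_succ_iff.mp (Finset.mem_range.mp hi)))
    (norm_nonneg _)

lemma aux_real (d : ℕ) (hd : 2 ≤ d) (A B ε X P : ℝ) (hA0 : 0 < A) (hB0 : 0 ≤ B)
    (hε : 0 < ε) (hX1 : 1 ≤ X) (hAX : 1 + 2 * B ≤ A * X) (hδε : 4 * B ≤ ε * (A * X))
    (hlow : A * X ^ d - B * X ^ (d - 1) ≤ P) (hhigh : P ≤ A * X ^ d + B * X ^ (d - 1)) :
    X ≤ P ∧ |Real.log P - ((d : ℝ) * Real.log X + Real.log A)| ≤ ε := by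
  have hX0 : (0 : ℝ) < X := lt_of_lt_of_le one_pos hX1
  have hd1nat : 1 ≤ d - 1 := by omega
  have hdsum : d - 1 + 1 = d := by omega
  have hXd : X ^ d = X ^ (d - 1) * X := by rw [← pow_succ, hdsum]
  have hXd1_1 : X ≤ X ^ (d - 1) := by
    calc X = X ^ 1 := (pow_one X).symm
    _ ≤ X ^ (d - 1) := pow_le_pow_right₀ hX1 hd1nat
  have hXle : X ≤ P := by
    refine le_trans ?_ hlow
    nlinarith [pow_pos hX0 (d - 1)]
  refine ⟨hXle, ?_⟩
  have hφpos : (0 : ℝ) < P := lt_of_lt_of_le hX0 hXle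
  set δ : ℝ := B / (A * X) with hδdef
  have hδ0 : 0 ≤ δ := by positivity
  have hδhalf : δ ≤ 1 / 2 := by
    rw [hδdef, div_le_iff₀ (by positivity)]
    linarith
  have hδε4 : δ ≤ ε / 4 := by
    rw [hδdef, div_le_iff₀ (by positivity)]
    nlinarith
  have hδprod : δ * (A * X ^ d) = B * X ^ (d - 1) := by
    rw [hδdef, hXd]
    field_simp
  set T : ℝ := P / (A * X ^ d) with hTdef
  have hAXd : (0 : ℝ) < A * X ^ d := by positivity
  have hTlb : 1 - δ ≤ T := by
    rw [hTdef, le_div_iff₀ hAXd]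
    nlinarith
  have hTub : T ≤ 1 + δ := by
    rw [hTdef, div_le_iff₀ hAXd]
    nlinarith
  have hTpos : 0 < T := by linarith
  have hlog1 : Real.log T ≤ 2 * δ := by
    have := Real.log_le_sub_one_of_pos hTpos
    linarith
  have hlog2 : -(2 * δ) ≤ Real.log T := by
    have h1 : Real.log T⁻¹ ≤ T⁻¹ - 1 := Real.log_le_sub_one_of_pos (by positivity)
    rw [Real.log_inv] at h1
    have h2 : T⁻¹ - 1 ≤ 2 * δ := by
      have h3 : (1 - T) * T⁻¹ ≤ δ * 2 := by
        rcases le_or_gt (1 - T) 0 with h | h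
        · have h6 : (1 - T) * T⁻¹ ≤ 0 := mul_nonpos_of_nonpos_of_nonneg h (by positivity)
          have h7 : (0 : ℝ) ≤ δ * 2 := by positivity
          linarith
        · have h5 : 1 - T ≤ δ := by linarith
          have hT2 : T⁻¹ ≤ 2 := by
            rw [inv_le_comm₀ hTpos (by norm_num)]
            linarith
          have hTinv0 : (0 : ℝ) ≤ T⁻¹ := by positivity
          exact mul_le_mul h5 hT2 hTinv0 hδ0
      have h4 : (1 - T) * T⁻¹ = T⁻¹ - 1 := by
        field_simp
      linarith
    linarith
  have hTmul : T * (A * X ^ d) = P := by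
    rw [hTdef]
    field_simp
  have hlogφ : Real.log P = Real.log T + (Real.log A + (d : ℝ) * Real.log X) := by
    rw [← hTmul, Real.log_mul (ne_of_gt hTpos) (ne_of_gt hAXd),
      Real.log_mul (ne_of_gt hA0) (ne_of_gt (pow_pos hX0 d)), Real.log_pow]
  rw [hlogφ, abs_le]
  constructor <;> linarith

lemma aux_step (φ : Polynomial ℂ) (hd : 2 ≤ φ.natDegree) {ε : ℝ} (hε : 0 < ε) :
    ∃ R : ℝ, 1 ≤ R ∧ ∀ x : ℂ, R ≤ ‖x‖ →
      ‖x‖ ≤ ‖φ.eval x‖ ∧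
      |Real.log (‖φ.eval x‖) -
        ((φ.natDegree : ℝ) * Real.log (‖x‖) +
          Real.log (‖φ.leadingCoeff‖))| ≤ ε := by
  have hφ0 : φ ≠ 0 := fun h => by simp [h] at hd
  obtain ⟨A, hAdef⟩ : ∃ A : ℝ, ‖φ.leadingCoeff‖ = A := ⟨_, rfl⟩
  have hA0 : 0 < A := hAdef ▸ norm_pos_iff.mpr (Polynomial.leadingCoeff_ne_zero.mpr hφ0)
  obtain ⟨B, hBdef⟩ : ∃ B : ℝ,
      (∑ i ∈ Finset.range (φ.eraseLead.natDegree + 1), ‖φ.eraseLead.coeff i‖) = B :=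
    ⟨_, rfl⟩
  have hB0 : 0 ≤ B := hBdef ▸ Finset.sum_nonneg fun i _ => norm_nonneg _
  refine ⟨max 1 (max ((1 + 2 * B) / A) (4 * B / (A * ε))), le_max_left _ _, fun x hx => ?_⟩
  obtain ⟨X, hXdef⟩ : ∃ X : ℝ, ‖x‖ = X := ⟨_, rfl⟩
  rw [hXdef] at hx ⊢
  set d := φ.natDegree with hdd
  have hX1 : (1 : ℝ) ≤ X := le_trans (le_max_left _ _) hx
  have hX0 : (0 : ℝ) < X := lt_of_lt_of_le one_pos hX1
  have hAX : 1 + 2 * B ≤ A * X := by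
    have h1 : (1 + 2 * B) / A ≤ X :=
      le_trans (le_trans (le_max_left _ _) (le_max_right _ _)) hx
    have := (div_le_iff₀ hA0).mp h1
    linarith
  have hδε : 4 * B ≤ ε * (A * X) := by
    have h1 : 4 * B / (A * ε) ≤ X :=
      le_trans (le_trans (le_max_right _ _) (le_max_right _ _)) hx
    have := (div_le_iff₀ (by positivity)).mp h1
    nlinarith
  -- polynomial estimates
  have hdecomp : φ.eval x = φ.eraseLead.eval x + φ.leadingCoeff * x ^ d := by
    have h := congrArg (Polynomial.eval x) (φ.eraseLead_add_C_mul_X_pow)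
    simp only [Polynomial.eval_add, Polynomial.eval_mul, Polynomial.eval_pow,
      Polynomial.eval_C, Polynomial.eval_X] at h
    exact h.symm
  have hqb : ‖φ.eraseLead.eval x‖ ≤ B * X ^ (d - 1) := by
    refine le_trans (by simpa [hXdef] using aux_eval_bound φ.eraseLead x (hXdef ▸ hX1)) ?_
    rw [hBdef]
    have : X ^ φ.eraseLead.natDegree ≤ X ^ (d - 1) :=
      pow_le_pow_right₀ hX1 (Polynomial.eraseLead_natDegree_le φ)
    exact mul_le_mul_of_nonneg_left this hB0
  have hlead : ‖φ.leadingCoeff * x ^ d‖ = A * X ^ d := by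
    rw [norm_mul, norm_pow, hAdef, hXdef]
  have hlow : A * X ^ d - B * X ^ (d - 1) ≤ ‖φ.eval x‖ := by
    have h1 : ‖φ.leadingCoeff * x ^ d‖ - ‖-(φ.eraseLead.eval x)‖ ≤
        ‖φ.leadingCoeff * x ^ d - -(φ.eraseLead.eval x)‖ := norm_sub_norm_le _ _
    rw [sub_neg_eq_add, norm_neg] at h1
    rw [add_comm] at hdecomp
    rw [← hdecomp, hlead] at h1
    linarith
  have hhigh : ‖φ.eval x‖ ≤ A * X ^ d + B * X ^ (d - 1) := by
    rw [hdecomp]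
    refine (norm_add_le _ _).trans ?_
    rw [hlead]
    linarith
  obtain ⟨P, hPdef⟩ : ∃ P : ℝ, ‖φ.eval x‖ = P := ⟨_, rfl⟩
  rw [hPdef] at hlow hhigh ⊢
  rw [hAdef]
  exact aux_real d hd A B ε X P hA0 hB0 hε hX1 hAX hδε hlow hhigh

lemma aux_main (φ : Polynomial ℂ) (hd : 2 ≤ φ.natDegree) {ε : ℝ} (hε : 0 < ε) :
    ∃ R : ℝ, ∀ x : ℂ, R ≤ ‖x‖ →
      |canHeight φ x - Real.log (‖x‖) -
        Real.log (‖φ.leadingCoeff‖) / ((φ.natDegree : ℝ) - 1)| ≤ ε := by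
  obtain ⟨R, hR1, hR⟩ := aux_step φ hd hε
  refine ⟨R, fun x hx => ?_⟩
  set d := φ.natDegree with hdd
  have hd1 : (1 : ℝ) ≤ (d : ℝ) - 1 := by
    have : (2 : ℝ) ≤ (d : ℝ) := by exact_mod_cast hd
    linarith
  have hd0 : (0 : ℝ) < (d : ℝ) := by linarith
  set f : ℂ → ℂ := fun y => φ.eval y with hf
  have hiter : ∀ n, R ≤ ‖f^[n] x‖ := by
    intro n
    induction n with
    | zero => simpa using hx
    | succ n ih =>
      rw [Function.iterate_succ_apply']
      exact le_trans ih (hR _ ih).1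
  set r : ℝ := ((d : ℝ))⁻¹ with hrdef
  have hr0 : 0 < r := by positivity
  have hr1 : r < 1 := by
    rw [hrdef]
    exact inv_lt_one_of_one_lt₀ (by linarith)
  set s : ℕ → ℝ := fun n => Real.log (‖f^[n] x‖) with hsdef
  set u : ℕ → ℝ := fun n => (((d : ℝ)) ^ n)⁻¹ * s n with hudef
  set A : ℝ := Real.log (‖φ.leadingCoeff‖) with hAdef
  have hstep : ∀ n, |s (n + 1) - ((d : ℝ) * s n + A)| ≤ ε := by
    intro n
    have h := (hR _ (hiter n)).2
    have hs1 : s (n + 1) = Real.log (‖φ.eval (f^[n] x)‖) := by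
      simp only [hsdef, Function.iterate_succ_apply', hf]
    rw [hs1]
    exact h
  set t : ℕ → ℝ := fun n => u (n + 1) - u n with htdef
  have ht_eq : ∀ n, t n = r ^ (n + 1) * (s (n + 1) - (d : ℝ) * s n) := by
    intro n
    have h1 : (((d : ℝ)) ^ (n + 1))⁻¹ = r ^ (n + 1) := by rw [hrdef, inv_pow]
    have h2 : (((d : ℝ)) ^ n)⁻¹ = r ^ (n + 1) * (d : ℝ) := by
      rw [hrdef, inv_pow, pow_succ]
      field_simp
    simp only [htdef, hudef, h1, h2]
    ring
  have htc : ∀ n, |t n - A * r ^ (n + 1)| ≤ ε * r ^ (n + 1) := by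
    intro n
    rw [ht_eq n]
    have heq : r ^ (n + 1) * (s (n + 1) - (d : ℝ) * s n) - A * r ^ (n + 1)
        = r ^ (n + 1) * (s (n + 1) - ((d : ℝ) * s n + A)) := by ring
    rw [heq, abs_mul, abs_of_pos (pow_pos hr0 (n + 1)), mul_comm ε (r ^ (n + 1))]
    exact mul_le_mul_of_nonneg_left (hstep n) (le_of_lt (pow_pos hr0 (n + 1)))
  have hsum_geo : Summable (fun n : ℕ => r ^ (n + 1)) := by
    have := (summable_geometric_of_lt_one hr0.le hr1).mul_right r
    simpa [pow_succ] using this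
  have hsum1 : Summable (fun n => t n - A * r ^ (n + 1)) :=
    Summable.of_abs (Summable.of_nonneg_of_le (fun n => abs_nonneg _) htc (hsum_geo.mul_left ε))
  have hsum2 : Summable (fun n : ℕ => A * r ^ (n + 1)) := hsum_geo.mul_left A
  have hsumt : Summable t := by
    have := hsum1.add hsum2
    simpa using this
  have htel : ∀ n, u n = u 0 + ∑ i ∈ Finset.range n, t i := by
    intro n
    have h1 : ∑ i ∈ Finset.range n, t i = u n - u 0 := by
      simp only [htdef]
      exact Finset.sum_range_sub u n
    rw [h1]
    ring
  have hu_tendsto : Tendsto u atTop (nhds (u 0 + ∑' n, t n)) := by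
    have h1 := hsumt.hasSum.tendsto_sum_nat
    have h2 := h1.const_add (u 0)
    exact h2.congr fun n => (htel n).symm
  have hmax : ∀ n, max 1 (‖f^[n] x‖) = ‖f^[n] x‖ := fun n =>
    max_eq_right (le_trans hR1 (hiter n))
  have hch : canHeight φ x = u 0 + ∑' n, t n := by
    have hg : Tendsto (fun n : ℕ => ((φ.natDegree : ℝ) ^ n)⁻¹ *
        Real.log (max 1 (‖(fun y : ℂ => φ.eval y)^[n] x‖))) atTop
        (nhds (u 0 + ∑' n, t n)) := by
      refine hu_tendsto.congr fun n => ?_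
      simp only [hudef, hsdef, hf]
      rw [hmax n]
    exact hg.limUnder_eq
  have hdne : ((d : ℝ)) ≠ 0 := ne_of_gt hd0
  have hd1ne : ((d : ℝ)) - 1 ≠ 0 := by linarith
  have hgeo_tsum : ∑' n : ℕ, r ^ (n + 1) = ((d : ℝ) - 1)⁻¹ := by
    have h1 : (fun n : ℕ => r ^ (n + 1)) = fun n : ℕ => r * r ^ n := by
      funext n; rw [pow_succ]; ring
    rw [h1, tsum_mul_left, tsum_geometric_of_lt_one hr0.le hr1, hrdef]
    rw [eq_comm, inv_eq_iff_eq_inv, eq_comm]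
    field_simp
  have hc_tsum : ∑' n : ℕ, A * r ^ (n + 1) = A / ((d : ℝ) - 1) := by
    rw [tsum_mul_left, hgeo_tsum, div_eq_mul_inv]
  have hbound : |∑' n, t n - A / ((d : ℝ) - 1)| ≤ ε * ((d : ℝ) - 1)⁻¹ := by
    rw [← hc_tsum, ← Summable.tsum_sub hsumt hsum2]
    have habs : |∑' n, (t n - A * r ^ (n + 1))| ≤ ∑' n, |t n - A * r ^ (n + 1)| := by
      have := norm_tsum_le_tsum_norm (f := fun n => t n - A * r ^ (n + 1))
        (by simpa [Real.norm_eq_abs] using hsum1.abs)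
      simpa [Real.norm_eq_abs] using this
    refine habs.trans ?_
    calc ∑' n, |t n - A * r ^ (n + 1)| ≤ ∑' n : ℕ, ε * r ^ (n + 1) :=
          Summable.tsum_le_tsum htc hsum1.abs (hsum_geo.mul_left ε)
    _ = ε * ((d : ℝ) - 1)⁻¹ := by rw [tsum_mul_left, hgeo_tsum]
  have hu0 : u 0 = Real.log (‖x‖) := by
    simp [hudef, hsdef]
  have hfinal : ε * ((d : ℝ) - 1)⁻¹ ≤ ε := by
    have hinv : ((d : ℝ) - 1)⁻¹ ≤ 1 := by
      rw [inv_le_comm₀ (by linarith) one_pos]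
      simpa using hd1
    nlinarith
  rw [hch]
  have h2 : u 0 + ∑' n, t n - Real.log (‖x‖) - A / ((d : ℝ) - 1)
      = ∑' n, t n - A / ((d : ℝ) - 1) := by
    rw [hu0]; ring
  rw [h2]
  exact hbound.trans hfinal

/-- Let `φ(x) = a x^d + ⋯ ∈ ℂ[x]` have degree `d ≥ 2` and leading
coefficient `a`.  Then `lim_{|x|→∞} (ĥ_φ(x) − log|x|) = log|a|/(d−1)`. -/
theorem canonical_local_height_asymptotic (φ : Polynomial ℂ) (hd : 2 ≤ φ.natDegree)
    (a : ℂ) (ha : φ.leadingCoeff = a) :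
    Tendsto (fun x : ℂ => canHeight φ x - Real.log (‖x‖))
      (comap (fun x : ℂ => ‖x‖) atTop)
      (nhds (Real.log (‖a‖) / ((φ.natDegree : ℝ) - 1))) := by
  subst ha
  rw [Metric.tendsto_nhds]
  intro ε hε
  obtain ⟨R, hR⟩ := aux_main φ hd (half_pos hε)
  have hev : ∀ᶠ x : ℂ in comap (fun x : ℂ => ‖x‖) atTop, R ≤ ‖x‖ :=
    eventually_comap.mpr ((eventually_ge_atTop R).mono fun y hy x hx => hx ▸ hy)
  filter_upwards [hev] with x hx
  rw [Real.dist_eq]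
  have h := hR x hx
  calc |canHeight φ x - Real.log (‖x‖) -
      Real.log (‖φ.leadingCoeff‖) / ((φ.natDegree : ℝ) - 1)| ≤ ε / 2 := h
  _ < ε := half_lt_self hε
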